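/- arXiv:2502.04806 — 2 statements merged into one kernel-verified Lean document; each statement's English description precedes it below -/
import Mathlib

section
/- If the pairing ⟨·,·⟩ : W ⊗ W → K is skew-symmetric, then the Hamiltonian flow Ham : |T(W)| → Der_K(T(W)) is a Lie algebra homomorphism, where |T(W)| carries the necklace Lie bracket induced by the pairing. -/
noncomputable def wordProd {K W : Type*} [Field K] [AddCommGroup W] [Module K W]
    (l : List W) : TensorAlgebra K W :=
  (l.map (TensorAlgebra.ι K)).prod

noncomputable def hamApply {K W : Type*} [Field K] [AddCommGroup W] [Module K W]
    (p : W →ₗ[K] W →ₗ[K] K) (u w : List W) : TensorAlgebra K W :=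
  ∑ i ∈ Finset.range u.length, ∑ j ∈ Finset.range w.length,
    p (u.getD i 0) (w.getD j 0) •
      wordProd (w.take j ++ u.drop (i + 1) ++ u.take i ++ w.drop (j + 1))

section Aux

lemma sum_tri_reindex {M : Type*} [AddCommMonoid M] (N : ℕ) (f g : ℕ → ℕ → M)
    (h : ∀ c d, c + d + 1 < N → f (c + d + 1) c = g c d) :
    ∑ a ∈ Finset.range N, ∑ b ∈ Finset.range a, f a b
      = ∑ c ∈ Finset.range N, ∑ d ∈ Finset.range (N - (c + 1)), g c d := by
  rw [Finset.sum_sigma' (Finset.range N) (fun a => Finset.range a) (fun a b => f a b),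
    Finset.sum_sigma' (Finset.range N) (fun c => Finset.range (N - (c + 1))) (fun c d => g c d)]
  refine Finset.sum_nbij' (i := fun x => ⟨x.2, x.1 - x.2 - 1⟩)
    (j := fun y => ⟨y.1 + y.2 + 1, y.1⟩) ?_ ?_ ?_ ?_ ?_
  · rintro ⟨a, b⟩ hab
    simp only [Finset.mem_sigma, Finset.mem_range] at hab ⊢
    omega
  · rintro ⟨c, d⟩ hcd
    simp only [Finset.mem_sigma, Finset.mem_range] at hcd ⊢
    omega
  · rintro ⟨a, b⟩ hab
    simp only [Finset.mem_sigma, Finset.mem_range] at hab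
    have e : b + (a - b - 1) + 1 = a := by omega
    exact Sigma.ext e HEq.rfl
  · rintro ⟨c, d⟩ hcd
    simp only [Finset.mem_sigma, Finset.mem_range] at hcd
    exact Sigma.ext rfl (heq_of_eq (show c + d + 1 - c - 1 = d by omega))
  · rintro ⟨a, b⟩ hab
    simp only [Finset.mem_sigma, Finset.mem_range] at hab
    have := h b (a - b - 1) (by omega)
    have e : b + (a - b - 1) + 1 = a := by omega
    rw [e] at this
    exact this

lemma sum_comm3 {M α β γ : Type*} [AddCommMonoid M] (A : Finset α) (B : Finset β)
    (C : Finset γ) (e : α → β → γ → M) :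
    (∑ l ∈ A, ∑ i ∈ B, ∑ m ∈ C, e l i m) = ∑ m ∈ C, ∑ i ∈ B, ∑ l ∈ A, e l i m :=
  calc (∑ l ∈ A, ∑ i ∈ B, ∑ m ∈ C, e l i m)
      = ∑ i ∈ B, ∑ l ∈ A, ∑ m ∈ C, e l i m := Finset.sum_comm
    _ = ∑ i ∈ B, ∑ m ∈ C, ∑ l ∈ A, e l i m :=
        Finset.sum_congr rfl fun i _ => Finset.sum_comm
    _ = ∑ m ∈ C, ∑ i ∈ B, ∑ l ∈ A, e l i m := Finset.sum_comm

end Aux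

section Core
variable {K W : Type*} [Field K] [AddCommGroup W] [Module K W]
variable (p : W →ₗ[K] W →ₗ[K] K)

lemma wordProd_append (a b : List W) :
    wordProd (K := K) (a ++ b) = wordProd a * wordProd b := by
  simp [wordProd]

lemma span_wordProd :
    Submodule.span K (Set.range (wordProd (K := K) (W := W))) = ⊤ := by
  rw [eq_top_iff]
  rintro x -
  induction x using TensorAlgebra.induction with
  | algebraMap r =>
      have h : (algebraMap K (TensorAlgebra K W)) r = r • wordProd (K := K) ([] : List W) := by
        simp [wordProd, Algebra.algebraMap_eq_smul_one]
      rw [h]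
      exact Submodule.smul_mem _ _ (Submodule.subset_span ⟨[], rfl⟩)
  | ι x => exact Submodule.subset_span ⟨[x], by simp [wordProd]⟩
  | mul a b ha hb =>
      refine Submodule.span_induction₂
        (p := fun a b _ _ => a * b ∈ Submodule.span K
          (Set.range (wordProd (K := K) (W := W)))) ?_ ?_ ?_ ?_ ?_ ?_ ?_ ha hb
      · rintro _ _ ⟨l1, rfl⟩ ⟨l2, rfl⟩
        exact Submodule.subset_span ⟨l1 ++ l2, wordProd_append l1 l2⟩
      · intro y _; simp
      · intro y _; simp
      · intro x y z _ _ _ h1 h2; rw [add_mul]; exact Submodule.add_mem _ h1 h2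
      · intro x y z _ _ _ h1 h2; rw [mul_add]; exact Submodule.add_mem _ h1 h2
      · intro r x y _ _ h1; rw [smul_mul_assoc]; exact Submodule.smul_mem _ _ h1
      · intro r x y _ _ h1; rw [mul_smul_comm]; exact Submodule.smul_mem _ _ h1
  | add a b ha hb => exact Submodule.add_mem _ ha hb

lemma getD_take' {w : List W} {l m : ℕ} (h : m < l) :
    (w.take l).getD m 0 = w.getD m 0 := by
  simp [List.getD_eq_getElem?_getD, List.getElem?_take, h]

lemma getD_drop' (w : List W) (l m : ℕ) :
    (w.drop l).getD m 0 = w.getD (l + m) 0 := by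
  simp [List.getD_eq_getElem?_getD, List.getElem?_drop]

/-- `Ham(|u|)` pairing into the active segment `a` of the word `x ++ a ++ y`. -/
noncomputable def hamC (u x a y : List W) : TensorAlgebra K W :=
  ∑ i ∈ Finset.range u.length, ∑ m ∈ Finset.range a.length,
    p (u.getD i 0) (a.getD m 0) •
      wordProd (x ++ a.take m ++ u.drop (i + 1) ++ u.take i ++ a.drop (m + 1) ++ y)

lemma hamApply_eq_hamC (u w : List W) : hamApply p u w = hamC p u [] w [] := by
  unfold hamApply hamC
  simp [List.append_assoc]

lemma hamC_append (u x a b y : List W) :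
    hamC p u x (a ++ b) y = hamC p u x a (b ++ y) + hamC p u (x ++ a) b y := by
  unfold hamC
  rw [← Finset.sum_add_distrib]
  refine Finset.sum_congr rfl fun i _ => ?_
  rw [List.length_append, Finset.sum_range_add]
  congr 1
  · refine Finset.sum_congr rfl fun m hm => ?_
    rw [Finset.mem_range] at hm
    rw [List.getD_append _ _ _ _ hm]
    congr 1
    rw [List.take_append, List.drop_append,
      Nat.sub_eq_zero_of_le (by omega : m ≤ a.length),
      Nat.sub_eq_zero_of_le (by omega : m + 1 ≤ a.length)]
    simp [List.append_assoc]
  · refine Finset.sum_congr rfl fun m hm => ?_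
    rw [Finset.mem_range] at hm
    rw [List.getD_append_right _ _ _ _ (by omega), Nat.add_sub_cancel_left]
    congr 1
    have e : a.length + m + 1 = a.length + (m + 1) := by omega
    rw [e, List.take_length_add_append, List.drop_length_add_append]
    simp [List.append_assoc]

/-- `Ham` of the cyclic word `x ++ a ++ y`, restricted to pairings of letters of `a`
with letters of `w`. -/
noncomputable def hamS (x a y w : List W) : TensorAlgebra K W :=
  ∑ k ∈ Finset.range a.length, ∑ l ∈ Finset.range w.length,
    p (a.getD k 0) (w.getD l 0) •
      wordProd (w.take l ++ a.drop (k + 1) ++ y ++ x ++ a.take k ++ w.drop (l + 1))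

lemma hamApply_eq_hamS (c w : List W) : hamApply p c w = hamS p [] c [] w := by
  unfold hamApply hamS
  simp [List.append_assoc]

lemma hamS_append (x a b y w : List W) :
    hamS p x (a ++ b) y w = hamS p x a (b ++ y) w + hamS p (x ++ a) b y w := by
  unfold hamS
  rw [List.length_append, Finset.sum_range_add]
  congr 1
  · refine Finset.sum_congr rfl fun k hk => ?_
    rw [Finset.mem_range] at hk
    refine Finset.sum_congr rfl fun l _ => ?_
    rw [List.getD_append _ _ _ _ hk]
    congr 1
    rw [List.take_append, List.drop_append,
      Nat.sub_eq_zero_of_le (by omega : k ≤ a.length),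
      Nat.sub_eq_zero_of_le (by omega : k + 1 ≤ a.length)]
    simp [List.append_assoc]
  · refine Finset.sum_congr rfl fun k hk => ?_
    rw [Finset.mem_range] at hk
    refine Finset.sum_congr rfl fun l _ => ?_
    rw [List.getD_append_right _ _ _ _ (by omega), Nat.add_sub_cancel_left]
    congr 1
    have e : a.length + k + 1 = a.length + (k + 1) := by omega
    rw [e, List.take_length_add_append, List.drop_length_add_append]
    simp [List.append_assoc]

/-- cyclic invariance of the acting word in `hamS`. -/
lemma hamS_cyc (x a y w : List W) : hamS p x a y w = hamS p [] a (y ++ x) w := by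
  unfold hamS
  simp [List.append_assoc]

/-- splitting of the action on the once-inserted word. -/
lemma splitC (u v w : List W) (j l : ℕ) :
    hamApply p u (w.take l ++ v.drop (j + 1) ++ v.take j ++ w.drop (l + 1))
      = hamC p u [] (w.take l) (v.drop (j + 1) ++ v.take j ++ w.drop (l + 1))
      + hamC p u (w.take l) (v.drop (j + 1)) (v.take j ++ w.drop (l + 1))
      + hamC p u (w.take l ++ v.drop (j + 1)) (v.take j) (w.drop (l + 1))
      + hamC p u (w.take l ++ v.drop (j + 1) ++ v.take j) (w.drop (l + 1)) [] := by
  rw [hamApply_eq_hamC, hamC_append, hamC_append, hamC_append]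
  simp only [List.append_nil, List.nil_append, List.append_assoc]

/-- splitting of the bracket word action. -/
lemma splitS (u v w : List W) (i j : ℕ) :
    hamApply p (v.take j ++ u.drop (i + 1) ++ u.take i ++ v.drop (j + 1)) w
      = hamS p [] (v.take j) (u.drop (i + 1) ++ u.take i ++ v.drop (j + 1)) w
      + hamS p (v.take j) (u.drop (i + 1)) (u.take i ++ v.drop (j + 1)) w
      + hamS p (v.take j ++ u.drop (i + 1)) (u.take i) (v.drop (j + 1)) w
      + hamS p (v.take j ++ u.drop (i + 1) ++ u.take i) (v.drop (j + 1)) [] w := by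
  rw [hamApply_eq_hamS, hamS_append, hamS_append, hamS_append]
  simp only [List.append_nil, List.nil_append, List.append_assoc]

/-- Core cancellation: action on the left `w`-part after insertion equals the
symmetric action on the right `w`-part. -/
lemma coreC1 (u v w : List W) :
    (∑ j ∈ Finset.range v.length, ∑ l ∈ Finset.range w.length,
      p (v.getD j 0) (w.getD l 0) •
        hamC p u [] (w.take l) (v.drop (j + 1) ++ v.take j ++ w.drop (l + 1)))
    = ∑ i ∈ Finset.range u.length, ∑ l ∈ Finset.range w.length,
      p (u.getD i 0) (w.getD l 0) •
        hamC p v (w.take l ++ u.drop (i + 1) ++ u.take i) (w.drop (l + 1)) [] := by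
  trans (∑ L ∈ Finset.range w.length, ∑ m ∈ Finset.range L, ∑ i ∈ Finset.range u.length,
      ∑ j ∈ Finset.range v.length,
      (p (u.getD i 0) (w.getD m 0) * p (v.getD j 0) (w.getD L 0)) •
        wordProd (w.take m ++ u.drop (i + 1) ++ u.take i ++ (w.take L).drop (m + 1)
          ++ v.drop (j + 1) ++ v.take j ++ w.drop (L + 1)))
  · simp only [hamC, Finset.smul_sum, smul_smul]
    rw [Finset.sum_comm]
    refine Finset.sum_congr rfl fun L hL => ?_
    rw [Finset.mem_range] at hL
    rw [List.length_take, min_eq_left hL.le]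
    refine Eq.trans (sum_comm3 _ _ _ _) ?_
    refine Finset.sum_congr rfl fun m hm => Finset.sum_congr rfl fun i _ =>
      Finset.sum_congr rfl fun j _ => ?_
    rw [Finset.mem_range] at hm
    rw [getD_take' hm, mul_comm]
    congr 1
    rw [List.take_take, min_eq_left hm.le]
    simp [List.append_assoc]
  · symm
    simp only [hamC, Finset.smul_sum, smul_smul, List.length_drop]
    rw [Finset.sum_comm]
    refine Eq.trans (Finset.sum_congr rfl fun L _ =>
      Eq.trans (sum_comm3 _ _ _ _) (Finset.sum_congr rfl fun m _ => Finset.sum_comm)) ?_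
    refine Eq.symm (sum_tri_reindex w.length _ _ ?_)
    intro c d hcd
    refine Finset.sum_congr rfl fun i _ => Finset.sum_congr rfl fun j _ => ?_
    rw [getD_drop', show c + 1 + d = c + d + 1 by omega]
    congr 1
    rw [List.drop_take, show c + d + 1 - (c + 1) = d by omega, List.drop_drop,
      show c + 1 + (d + 1) = c + d + 1 + 1 by omega]
    simp [List.append_assoc]

/-- Core identity: `u` pairing into `v.drop (j+1)` equals the `v.take`-segment of
the bracket action. -/
lemma coreC2 (u v w : List W) :
    (∑ j ∈ Finset.range v.length, ∑ l ∈ Finset.range w.length,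
      p (v.getD j 0) (w.getD l 0) •
        hamC p u (w.take l) (v.drop (j + 1)) (v.take j ++ w.drop (l + 1)))
    = ∑ i ∈ Finset.range u.length, ∑ j ∈ Finset.range v.length,
      p (u.getD i 0) (v.getD j 0) •
        hamS p [] (v.take j) (u.drop (i + 1) ++ u.take i ++ v.drop (j + 1)) w := by
  trans (∑ j ∈ Finset.range v.length, ∑ k ∈ Finset.range j, ∑ i ∈ Finset.range u.length,
      ∑ l ∈ Finset.range w.length,
      (p (u.getD i 0) (v.getD j 0) * p (v.getD k 0) (w.getD l 0)) •
        wordProd (w.take l ++ (v.take j).drop (k + 1) ++ u.drop (i + 1) ++ u.take i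
          ++ v.drop (j + 1) ++ v.take k ++ w.drop (l + 1)))
  · simp only [hamC, Finset.smul_sum, smul_smul, List.length_drop]
    refine Eq.trans (Finset.sum_congr rfl fun j _ => sum_comm3 _ _ _ _) ?_
    refine Eq.symm (sum_tri_reindex v.length _ _ ?_)
    intro j m hjm
    refine Finset.sum_congr rfl fun i _ => Finset.sum_congr rfl fun l _ => ?_
    rw [getD_drop', show j + 1 + m = j + m + 1 by omega, mul_comm]
    congr 1
    rw [List.drop_take, show j + m + 1 - (j + 1) = m by omega, List.drop_drop,
      show j + 1 + (m + 1) = j + m + 1 + 1 by omega]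
    simp [List.append_assoc]
  · symm
    simp only [hamS, Finset.smul_sum, smul_smul]
    rw [Finset.sum_comm]
    refine Finset.sum_congr rfl fun j hj => ?_
    rw [Finset.mem_range] at hj
    rw [List.length_take, min_eq_left hj.le, Finset.sum_comm]
    refine Finset.sum_congr rfl fun k hk => Finset.sum_congr rfl fun i _ =>
      Finset.sum_congr rfl fun l _ => ?_
    rw [Finset.mem_range] at hk
    rw [getD_take' hk]
    congr 1
    rw [List.take_take, min_eq_left hk.le]
    simp [List.append_assoc]

/-- Core identity: `u` pairing into `v.take j` equals the `v.drop`-segment of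
the bracket action. -/
lemma coreC3 (u v w : List W) :
    (∑ j ∈ Finset.range v.length, ∑ l ∈ Finset.range w.length,
      p (v.getD j 0) (w.getD l 0) •
        hamC p u (w.take l ++ v.drop (j + 1)) (v.take j) (w.drop (l + 1)))
    = ∑ i ∈ Finset.range u.length, ∑ j ∈ Finset.range v.length,
      p (u.getD i 0) (v.getD j 0) •
        hamS p (v.take j ++ u.drop (i + 1) ++ u.take i) (v.drop (j + 1)) [] w := by
  trans (∑ j ∈ Finset.range v.length, ∑ m ∈ Finset.range j, ∑ i ∈ Finset.range u.length,
      ∑ l ∈ Finset.range w.length,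
      (p (u.getD i 0) (v.getD m 0) * p (v.getD j 0) (w.getD l 0)) •
        wordProd (w.take l ++ v.drop (j + 1) ++ v.take m ++ u.drop (i + 1) ++ u.take i
          ++ (v.take j).drop (m + 1) ++ w.drop (l + 1)))
  · simp only [hamC, Finset.smul_sum, smul_smul]
    refine Finset.sum_congr rfl fun j hj => ?_
    rw [Finset.mem_range] at hj
    rw [List.length_take, min_eq_left hj.le]
    refine Eq.trans (sum_comm3 _ _ _ _) ?_
    refine Finset.sum_congr rfl fun m hm => Finset.sum_congr rfl fun i _ =>
      Finset.sum_congr rfl fun l _ => ?_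
    rw [Finset.mem_range] at hm
    rw [getD_take' hm, mul_comm]
    congr 1
    rw [List.take_take, min_eq_left hm.le]
  · symm
    simp only [hamS, Finset.smul_sum, smul_smul, List.length_drop]
    rw [Finset.sum_comm]
    refine Eq.trans (Finset.sum_congr rfl fun j _ => Finset.sum_comm) ?_
    refine Eq.symm (sum_tri_reindex v.length _ _ ?_)
    intro j k hjk
    refine Finset.sum_congr rfl fun i _ => Finset.sum_congr rfl fun l _ => ?_
    rw [getD_drop', show j + 1 + k = j + k + 1 by omega]
    congr 1
    rw [List.drop_take, show j + k + 1 - (j + 1) = k by omega, List.drop_drop,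
      show j + 1 + (k + 1) = j + k + 1 + 1 by omega]
    simp [List.append_assoc]

end Core

theorem ham_is_lie_algebra_hom
    (K W : Type*) [Field K] [CharZero K] [AddCommGroup W] [Module K W]
    [FiniteDimensional K W]
    (p : W →ₗ[K] W →ₗ[K] K)
    (hskew : ∀ x y : W, p x y = - p y x)
    (u v : List W)
    (Du Dv Dbr : TensorAlgebra K W →ₗ[K] TensorAlgebra K W)
    (hDu : ∀ w : List W, Du (wordProd w) = hamApply p u w)
    (hDv : ∀ w : List W, Dv (wordProd w) = hamApply p v w)
    -- `Dbr = Ham` of the necklace bracket `{|u|, |v|}`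
    (hDbr : ∀ w : List W, Dbr (wordProd w) =
      ∑ i ∈ Finset.range u.length, ∑ j ∈ Finset.range v.length,
        p (u.getD i 0) (v.getD j 0) •
          hamApply p (v.take j ++ u.drop (i + 1) ++ u.take i ++ v.drop (j + 1)) w) :
    Du ∘ₗ Dv - Dv ∘ₗ Du = Dbr := by
  apply LinearMap.ext_on (span_wordProd (K := K) (W := W))
  rintro _ ⟨w, rfl⟩
  -- expansion of a composite action
  have expand : ∀ (D : TensorAlgebra K W →ₗ[K] TensorAlgebra K W) (c : List W),
      (∀ w' : List W, D (wordProd w') = hamApply p c w') →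
      ∀ (d : List W), D (hamApply p d w) =
        ∑ j ∈ Finset.range d.length, ∑ l ∈ Finset.range w.length,
          p (d.getD j 0) (w.getD l 0) •
            hamApply p c (w.take l ++ d.drop (j + 1) ++ d.take j ++ w.drop (l + 1)) := by
    intro D c hD d
    conv_lhs => rw [hamApply]
    rw [map_sum]
    refine Finset.sum_congr rfl fun j _ => ?_
    rw [map_sum]
    refine Finset.sum_congr rfl fun l _ => ?_
    rw [map_smul, hD]
  have hDuDv : Du (Dv (wordProd w))
      = (∑ j ∈ Finset.range v.length, ∑ l ∈ Finset.range w.length,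
          p (v.getD j 0) (w.getD l 0) •
            hamC p u [] (w.take l) (v.drop (j + 1) ++ v.take j ++ w.drop (l + 1)))
      + (∑ j ∈ Finset.range v.length, ∑ l ∈ Finset.range w.length,
          p (v.getD j 0) (w.getD l 0) •
            hamC p u (w.take l) (v.drop (j + 1)) (v.take j ++ w.drop (l + 1)))
      + (∑ j ∈ Finset.range v.length, ∑ l ∈ Finset.range w.length,
          p (v.getD j 0) (w.getD l 0) •
            hamC p u (w.take l ++ v.drop (j + 1)) (v.take j) (w.drop (l + 1)))
      + (∑ j ∈ Finset.range v.length, ∑ l ∈ Finset.range w.length,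
          p (v.getD j 0) (w.getD l 0) •
            hamC p u (w.take l ++ v.drop (j + 1) ++ v.take j) (w.drop (l + 1)) []) := by
    rw [hDv, expand Du u hDu v]
    simp only [splitC, smul_add, Finset.sum_add_distrib]
  have hDvDu : Dv (Du (wordProd w))
      = (∑ j ∈ Finset.range u.length, ∑ l ∈ Finset.range w.length,
          p (u.getD j 0) (w.getD l 0) •
            hamC p v [] (w.take l) (u.drop (j + 1) ++ u.take j ++ w.drop (l + 1)))
      + (∑ j ∈ Finset.range u.length, ∑ l ∈ Finset.range w.length,
          p (u.getD j 0) (w.getD l 0) •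
            hamC p v (w.take l) (u.drop (j + 1)) (u.take j ++ w.drop (l + 1)))
      + (∑ j ∈ Finset.range u.length, ∑ l ∈ Finset.range w.length,
          p (u.getD j 0) (w.getD l 0) •
            hamC p v (w.take l ++ u.drop (j + 1)) (u.take j) (w.drop (l + 1)))
      + (∑ j ∈ Finset.range u.length, ∑ l ∈ Finset.range w.length,
          p (u.getD j 0) (w.getD l 0) •
            hamC p v (w.take l ++ u.drop (j + 1) ++ u.take j) (w.drop (l + 1)) []) := by
    rw [hDu, expand Dv v hDv u]
    simp only [splitC, smul_add, Finset.sum_add_distrib]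
  have hBr : Dbr (wordProd w)
      = (∑ i ∈ Finset.range u.length, ∑ j ∈ Finset.range v.length,
          p (u.getD i 0) (v.getD j 0) •
            hamS p [] (v.take j) (u.drop (i + 1) ++ u.take i ++ v.drop (j + 1)) w)
      + (∑ i ∈ Finset.range u.length, ∑ j ∈ Finset.range v.length,
          p (u.getD i 0) (v.getD j 0) •
            hamS p (v.take j) (u.drop (i + 1)) (u.take i ++ v.drop (j + 1)) w)
      + (∑ i ∈ Finset.range u.length, ∑ j ∈ Finset.range v.length,
          p (u.getD i 0) (v.getD j 0) •
            hamS p (v.take j ++ u.drop (i + 1)) (u.take i) (v.drop (j + 1)) w)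
      + (∑ i ∈ Finset.range u.length, ∑ j ∈ Finset.range v.length,
          p (u.getD i 0) (v.getD j 0) •
            hamS p (v.take j ++ u.drop (i + 1) ++ u.take i) (v.drop (j + 1)) [] w) := by
    rw [hDbr]
    simp only [splitS, smul_add, Finset.sum_add_distrib]
  -- the skew-symmetric identifications
  have hSK1 : (∑ j ∈ Finset.range u.length, ∑ l ∈ Finset.range w.length,
        p (u.getD j 0) (w.getD l 0) •
          hamC p v (w.take l) (u.drop (j + 1)) (u.take j ++ w.drop (l + 1)))
      = - ∑ i ∈ Finset.range u.length, ∑ j ∈ Finset.range v.length,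
          p (u.getD i 0) (v.getD j 0) •
            hamS p (v.take j ++ u.drop (i + 1)) (u.take i) (v.drop (j + 1)) w := by
    rw [coreC2 p v u w, Finset.sum_comm, ← Finset.sum_neg_distrib]
    refine Finset.sum_congr rfl fun i _ => ?_
    rw [← Finset.sum_neg_distrib]
    refine Finset.sum_congr rfl fun j _ => ?_
    rw [hskew (v.getD j 0) (u.getD i 0), neg_smul]
    congr 1
    rw [hamS_cyc p (List.take j v ++ List.drop (i + 1) u) (List.take i u)
      (List.drop (j + 1) v)]
    simp [List.append_assoc]
  have hSK2 : (∑ j ∈ Finset.range u.length, ∑ l ∈ Finset.range w.length,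
        p (u.getD j 0) (w.getD l 0) •
          hamC p v (w.take l ++ u.drop (j + 1)) (u.take j) (w.drop (l + 1)))
      = - ∑ i ∈ Finset.range u.length, ∑ j ∈ Finset.range v.length,
          p (u.getD i 0) (v.getD j 0) •
            hamS p (v.take j) (u.drop (i + 1)) (u.take i ++ v.drop (j + 1)) w := by
    rw [coreC3 p v u w, Finset.sum_comm, ← Finset.sum_neg_distrib]
    refine Finset.sum_congr rfl fun i _ => ?_
    rw [← Finset.sum_neg_distrib]
    refine Finset.sum_congr rfl fun j _ => ?_
    rw [hskew (v.getD j 0) (u.getD i 0), neg_smul]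
    congr 1
    rw [hamS_cyc p (List.take i u ++ List.drop (j + 1) v ++ List.take j v)
      (List.drop (i + 1) u) [], hamS_cyc p (List.take j v) (List.drop (i + 1) u)
      (List.take i u ++ List.drop (j + 1) v)]
    simp [List.append_assoc]
  simp only [LinearMap.sub_apply, LinearMap.comp_apply]
  rw [hDuDv, hDvDu, hBr, coreC1 p u v w, ← coreC1 p v u w, coreC2 p u v w, coreC3 p u v w,
    hSK1, hSK2]
  abel
end

section
/- For the tensor algebra T(W) over a finite-dimensional K-vector space W, with the canonical flat connection ∇_W on Ω¹T(W) (determined by ∇_W(dw) = 0 for w ∈ W) and a skew-symmetric pairing on W, the 1-divergence applied to Hamiltonian derivations is given explicitly by: for cyclic words w = w_1⋯w_r (w_i ∈ W), −δ_1(w) = Σ_{s ≠ t} ⟨w_s, w_t⟩ |w_{s+1}⋯w_{t−1}| ⊗ |w_{t+1}⋯w_{s−1}| (indices cyclic), which is the ribbon-graph (tadpole) cobracket on |T(W)|. -/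
open scoped TensorProduct

/-!
STATEMENT 12: For the tensor algebra `T(W)` over a finite-dimensional vector
space `W`, with the canonical flat connection `∇_W` on `Ω¹T(W)` (determined by
`∇_W(dw) = 0`) and a skew-symmetric pairing `⟨·,·⟩` on `W`, the 1-divergence
applied to the Hamiltonian derivation of a cyclic word `w = w_1⋯w_r` is
`−δ_1(w) = Σ_{s ≠ t} ⟨w_s, w_t⟩ |w_{s+1}⋯w_{t−1}| ⊗ |w_{t+1}⋯w_{s−1}|`
(indices cyclic), the tadpole ribbon-graph cobracket on `|T(W)|`.

`Ω¹T(W)` is the free `T(W)`-bimodule on `W`, concretely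
`Ω1 = T ⊗ W ⊗ T` with `a (dv) b = a ⊗ v ⊗ b`; `d : T → Ω1` is the universal
derivation (`d(ι v) = 1 ⊗ v ⊗ 1` plus the Leibniz rule);
`H = Ham(|u|)` is the Hamiltonian derivation of the word `u` (pinned by the
extended-pairing formula `hamApply` on words); and
`c_{∇_W}(H) = (i_{φ(H)} ⊗ id)∘∇_W − L_H` is the `T(W)`-bimodule endomorphism
of `Ω¹T(W)` determined by `c(a (dv) b) = −a·d(H(ι v))·b`.  Its trace `δ_1(u)`
is computed, via the basis `{d(b_i)}` of the free bimodule `Ω¹T(W)`, as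
`Σ_i |x_i| ⊗ |y_i|` where `c(d b_i) = Σ x_i (d b_i) y_i`-coefficient extraction
is given by `coordMap`, landing in `|T(W)| ⊗ |T(W)| ≅ |T(W)^e|`.
-/

def commutatorSubmodule (K B : Type*) [Field K] [Ring B] [Algebra K B] : Submodule K B :=
  Submodule.span K {x : B | ∃ a b : B, x = a * b - b * a}

/-- Left multiplication by `a ∈ T(W)` on `Ω¹T(W) = T ⊗ W ⊗ T`. -/
noncomputable def lmulOm (K W : Type*) [Field K] [AddCommGroup W] [Module K W]
    (a : TensorAlgebra K W) :
    TensorAlgebra K W ⊗[K] (W ⊗[K] TensorAlgebra K W) →ₗ[K]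
      TensorAlgebra K W ⊗[K] (W ⊗[K] TensorAlgebra K W) :=
  TensorProduct.map (LinearMap.mulLeft K a) LinearMap.id

/-- Right multiplication by `c ∈ T(W)` on `Ω¹T(W) = T ⊗ W ⊗ T`. -/
noncomputable def rmulOm (K W : Type*) [Field K] [AddCommGroup W] [Module K W]
    (c : TensorAlgebra K W) :
    TensorAlgebra K W ⊗[K] (W ⊗[K] TensorAlgebra K W) →ₗ[K]
      TensorAlgebra K W ⊗[K] (W ⊗[K] TensorAlgebra K W) :=
  TensorProduct.map LinearMap.id (TensorProduct.map LinearMap.id (LinearMap.mulRight K c))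

/-- Extraction of the coefficient bimodule `T ⊗ T` of the basis element `d(b_i)`
from `Ω¹T(W) = T ⊗ W ⊗ T`. -/
noncomputable def coordMap {K W : Type*} [Field K] [AddCommGroup W] [Module K W]
    {ι : Type*} (bW : Module.Basis ι K W) (i : ι) :
    TensorAlgebra K W ⊗[K] (W ⊗[K] TensorAlgebra K W) →ₗ[K]
      TensorAlgebra K W ⊗[K] TensorAlgebra K W :=
  TensorProduct.map LinearMap.id
    ((TensorProduct.lid K (TensorAlgebra K W)).toLinearMap ∘ₗ
      TensorProduct.map (bW.coord i) LinearMap.id)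

/-- Cyclic segment `w_{s+1} ⋯ w_{t−1}` of the word `u` (indices mod `u.length`). -/
def cseg {W : Type*} (u : List W) (s t : ℕ) : List W :=
  if s < t then (u.drop (s + 1)).take (t - s - 1)
  else u.drop (s + 1) ++ u.take t


section Aux
open Finset
variable {K W : Type*} [Field K] [AddCommGroup W] [Module K W]

lemma wordProd_nil : wordProd ([] : List W) = (1 : TensorAlgebra K W) := rfl

lemma wordProd_cons (v : W) (l : List W) :
    wordProd (K := K) (v :: l) = TensorAlgebra.ι K v * wordProd l := by
  simp [wordProd]

lemma lmulOm_tmul (a x : TensorAlgebra K W) (v : W) (y : TensorAlgebra K W) :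
    lmulOm K W a (x ⊗ₜ (v ⊗ₜ y)) = (a * x) ⊗ₜ (v ⊗ₜ y) := by
  simp [lmulOm]

lemma rmulOm_tmul (c x : TensorAlgebra K W) (v : W) (y : TensorAlgebra K W) :
    rmulOm K W c (x ⊗ₜ (v ⊗ₜ y)) = x ⊗ₜ (v ⊗ₜ (y * c)) := by
  simp [rmulOm]

lemma lmulOm_one : lmulOm K W 1 = LinearMap.id := by
  simp [lmulOm, LinearMap.mulLeft_one, TensorProduct.map_id]

lemma rmulOm_one : rmulOm K W 1 = LinearMap.id := by
  simp [rmulOm, LinearMap.mulRight_one, TensorProduct.map_id]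

lemma coordMap_tmul {ι : Type*} (bW : Module.Basis ι K W) (i : ι)
    (x : TensorAlgebra K W) (w : W) (y : TensorAlgebra K W) :
    coordMap bW i (x ⊗ₜ (w ⊗ₜ y)) = (bW.coord i w) • (x ⊗ₜ[K] y) := by
  simp [coordMap, TensorProduct.smul_tmul, TensorProduct.tmul_smul]

lemma d_word
    (d : TensorAlgebra K W →ₗ[K] TensorAlgebra K W ⊗[K] (W ⊗[K] TensorAlgebra K W))
    (hd1 : ∀ v : W, d (TensorAlgebra.ι K v) = 1 ⊗ₜ (v ⊗ₜ 1))
    (hdLeib : ∀ a b : TensorAlgebra K W,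
      d (a * b) = rmulOm K W b (d a) + lmulOm K W a (d b)) :
    ∀ l : List W, d (wordProd l) =
      ∑ t ∈ Finset.range l.length,
        wordProd (l.take t) ⊗ₜ ((l.getD t 0) ⊗ₜ wordProd (l.drop (t+1))) := by
  have hone : d 1 = 0 := by
    have h := hdLeib 1 1
    rw [mul_one, lmulOm_one, rmulOm_one] at h
    simp only [LinearMap.id_apply] at h
    exact (left_eq_add.mp h)
  intro l
  induction l with
  | nil => simpa [wordProd] using hone
  | cons v l ih =>
    rw [wordProd_cons, hdLeib, hd1, rmulOm_tmul, one_mul, ih, map_sum]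
    simp only [List.length_cons, Finset.sum_range_succ', List.take_succ_cons,
      List.getD_cons_succ, List.drop_succ_cons, List.take_zero, List.getD_cons_zero,
      List.drop_zero, wordProd_cons, wordProd_nil, lmulOm_tmul]
    exact add_comm _ _

end Aux
theorem one_divergence_is_tadpole_cobracket
    (K W : Type*) [Field K] [CharZero K] [AddCommGroup W] [Module K W]
    [FiniteDimensional K W]
    {ι : Type*} [Fintype ι] (bW : Module.Basis ι K W)
    (p : W →ₗ[K] W →ₗ[K] K)
    (hskew : ∀ x y : W, p x y = - p y x)
    (u : List W)
    -- `H = Ham(|u|)`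
    (H : TensorAlgebra K W →ₗ[K] TensorAlgebra K W)
    (hH : ∀ w : List W, H (wordProd w) = hamApply p u w)
    -- the universal derivation `d : T(W) → Ω¹T(W)`
    (d : TensorAlgebra K W →ₗ[K]
      TensorAlgebra K W ⊗[K] (W ⊗[K] TensorAlgebra K W))
    (hd1 : ∀ v : W, d (TensorAlgebra.ι K v) = 1 ⊗ₜ (v ⊗ₜ 1))
    (hdLeib : ∀ a b : TensorAlgebra K W,
      d (a * b) = rmulOm K W b (d a) + lmulOm K W a (d b))
    -- `c_{∇_W}(H)`, pinned on the bimodule generators by `c(a (dv) b) = −a·d(H v)·b`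
    (cH : TensorAlgebra K W ⊗[K] (W ⊗[K] TensorAlgebra K W) →ₗ[K]
      TensorAlgebra K W ⊗[K] (W ⊗[K] TensorAlgebra K W))
    (hcH : ∀ (a : TensorAlgebra K W) (v : W) (c : TensorAlgebra K W),
      cH (a ⊗ₜ (v ⊗ₜ c))
        = - lmulOm K W a (rmulOm K W c (d (H (TensorAlgebra.ι K v))))) :
    -- `−δ_1(|u|) = Σ_{s≠t} ⟨u_s,u_t⟩ |u_{s+1}⋯u_{t−1}| ⊗ |u_{t+1}⋯u_{s−1}|`
    - (∑ i : ι,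
        TensorProduct.map (commutatorSubmodule K (TensorAlgebra K W)).mkQ
            (commutatorSubmodule K (TensorAlgebra K W)).mkQ
          (coordMap bW i (cH (1 ⊗ₜ (bW i ⊗ₜ 1)))))
      = ∑ s ∈ Finset.range u.length, ∑ t ∈ Finset.range u.length,
          if s ≠ t then
            p (u.getD s 0) (u.getD t 0) •
              ((commutatorSubmodule K (TensorAlgebra K W)).mkQ (wordProd (cseg u s t)) ⊗ₜ
                (commutatorSubmodule K (TensorAlgebra K W)).mkQ (wordProd (cseg u t s)))
          else 0 := by
  classical
  set r := u.length with hr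
  set Q := (commutatorSubmodule K (TensorAlgebra K W)).mkQ with hQ
  set L : ℕ → List W := fun s => u.drop (s+1) ++ u.take s with hL
  have hlen : ∀ s, s < r → (L s).length = r - 1 := by
    intro s hs
    simp only [hL, List.length_append, List.length_drop, List.length_take]
    omega
  have hdw := d_word d hd1 hdLeib
  have hHι : ∀ v : W, H (TensorAlgebra.ι K v)
      = ∑ s ∈ Finset.range r, p (u.getD s 0) v • wordProd (L s) := by
    intro v
    have h1 : TensorAlgebra.ι K v = wordProd ([v]) := by simp [wordProd]
    rw [h1, hH, hamApply]
    simp [hL, hr]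
  have hgen : ∀ v : W, cH (1 ⊗ₜ (v ⊗ₜ 1)) = - d (H (TensorAlgebra.ι K v)) := by
    intro v
    rw [hcH, rmulOm_one, lmulOm_one]
    simp
  -- coordinate extraction for a single basis vector
  have hsum : ∀ i : ι, coordMap bW i (cH (1 ⊗ₜ (bW i ⊗ₜ 1)))
      = - ∑ s ∈ Finset.range r, ∑ t ∈ Finset.range (r - 1),
          (p (u.getD s 0) (bW i) * bW.repr ((L s).getD t 0) i) •
            (wordProd ((L s).take t) ⊗ₜ[K] wordProd ((L s).drop (t+1))) := by
    intro i
    rw [hgen, hHι, map_sum, map_neg, map_sum]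
    congr 1
    refine Finset.sum_congr rfl fun s hs => ?_
    rw [map_smul, hdw, hlen s (Finset.mem_range.mp hs), map_smul, map_sum,
      Finset.smul_sum]
    refine Finset.sum_congr rfl fun t ht => ?_
    rw [coordMap_tmul, smul_smul]
    rfl
  have hpair : ∀ (a x : W), (∑ i : ι, p a (bW i) * (bW.repr x) i) = p a x := by
    intro a x
    conv_rhs => rw [← bW.sum_repr x]
    rw [map_sum]
    refine Finset.sum_congr rfl fun i _ => ?_
    rw [map_smul, smul_eq_mul, mul_comm]
  have hmain : - (∑ i : ι, TensorProduct.map Q Q (coordMap bW i (cH (1 ⊗ₜ (bW i ⊗ₜ 1)))))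
      = ∑ s ∈ Finset.range r, ∑ t ∈ Finset.range (r-1),
          p (u.getD s 0) ((L s).getD t 0) •
            (Q (wordProd ((L s).take t)) ⊗ₜ[K] Q (wordProd ((L s).drop (t+1)))) := by
    simp only [hsum, map_neg, map_sum, map_smul, TensorProduct.map_tmul]
    rw [Finset.sum_neg_distrib, neg_neg, Finset.sum_comm]
    refine Finset.sum_congr rfl fun s _ => ?_
    rw [Finset.sum_comm]
    refine Finset.sum_congr rfl fun t _ => ?_
    rw [← Finset.sum_smul]
    congr 1
    exact hpair _ _
  rw [hmain]
  refine Finset.sum_congr rfl fun s hs => ?_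
  have hsr := Finset.mem_range.mp hs
  conv_rhs => rw [← Finset.sum_filter, Finset.filter_ne]
  refine Finset.sum_nbij' (i := fun t' => if s + 1 + t' < r then s+1+t' else s+1+t'-r)
    (j := fun t => if s < t then t - s - 1 else t + (r - s - 1)) ?_ ?_ ?_ ?_ ?_
  · intro a ha
    simp only [Finset.mem_range] at ha
    simp only [Finset.mem_erase, Finset.mem_range]
    split_ifs <;> omega
  · intro a ha
    simp only [Finset.mem_erase, Finset.mem_range] at ha
    simp only [Finset.mem_range]
    split_ifs <;> omega
  · intro a ha
    simp only [Finset.mem_range] at ha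
    split_ifs <;> omega
  · intro a ha
    simp only [Finset.mem_erase, Finset.mem_range] at ha
    split_ifs <;> omega
  · intro t' ht'
    have ht'' := Finset.mem_range.mp ht'
    by_cases hcase : s + 1 + t' < r
    · rw [if_pos hcase]
      have e1 : (L s).getD t' 0 = u.getD (s+1+t') 0 := by
        rw [hL]
        rw [List.getD_append _ _ _ t' (by simp [List.length_drop]; omega)]
        simp [List.getD_eq_getElem?_getD, List.getElem?_drop]
      have e2 : (L s).take t' = cseg u s (s+1+t') := by
        rw [hL, List.take_append]
        have h0 : t' - (u.drop (s+1)).length = 0 := by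
          simp [List.length_drop]; omega
        rw [h0, List.take_zero, List.append_nil, cseg, if_pos (by omega)]
        congr 1
        omega
      have e3 : (L s).drop (t'+1) = cseg u (s+1+t') s := by
        rw [hL, List.drop_append]
        have h0 : t' + 1 - (u.drop (s+1)).length = 0 := by
          simp [List.length_drop]; omega
        rw [h0, List.drop_zero, List.drop_drop, cseg, if_neg (by omega)]
        congr 2
      rw [e1, e2, e3]
    · rw [if_neg hcase]
      set t := s + 1 + t' - r with htdef
      have hts : t < s := by omega
      have e1 : (L s).getD t' 0 = u.getD t 0 := by
        rw [hL, List.getD_append_right _ _ _ t' (by simp [List.length_drop]; omega)]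
        have h0 : t' - (u.drop (s+1)).length = t := by
          simp [List.length_drop]; omega
        rw [h0]
        simp [List.getD_eq_getElem?_getD, List.getElem?_take, hts]
      have e2 : (L s).take t' = cseg u s t := by
        rw [hL, List.take_append,
          List.take_of_length_le (by simp [List.length_drop]; omega),
          cseg, if_neg (by omega)]
        congr 1
        have h0 : t' - (u.drop (s+1)).length = t := by
          simp [List.length_drop]; omega
        rw [h0, List.take_take]
        congr 1
        omega
      have e3 : (L s).drop (t'+1) = cseg u t s := by
        rw [hL, List.drop_append,
          List.drop_of_length_le (by simp [List.length_drop]; omega),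
          List.nil_append]
        have h0 : t' + 1 - (u.drop (s+1)).length = t + 1 := by
          simp [List.length_drop]; omega
        rw [h0, List.drop_take, cseg, if_pos hts]
        congr 1
      rw [e1, e2, e3]
end
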